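/- arXiv:2109.01464 — 3 statements merged into one kernel-verified Lean document; each statement's English description precedes it below -/
import Mathlib

section
/- If A and X are N×N real matrices with X·Xᵀ = I, then for every k ≥ 1, (sw(A,X)·sw(A,X)ᵀ)^k = 2^{2k-1}·[[(AAᵀ)^k, (AAᵀ)^k Xᵀ],[X(AAᵀ)^k, X(AAᵀ)^k Xᵀ]]. -/
open Matrix

/-- The swirl of two `N × N` matrices. -/
def sw {n : ℕ} (A X : Matrix (Fin n) (Fin n) ℝ) :
    Matrix (Fin n ⊕ Fin n) (Fin n ⊕ Fin n) ℝ :=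
  Matrix.fromBlocks (A * X) A (X * A * X) (X * A)

lemma aux_cancel {n : ℕ} {X : Matrix (Fin n) (Fin n) ℝ}
    (hX' : Xᵀ * X = 1) (M N : Matrix (Fin n) (Fin n) ℝ) :
    M * Xᵀ * (X * N) = M * N := by
  rw [mul_assoc, ← mul_assoc Xᵀ, hX', one_mul]

lemma aux_pow {n : ℕ} (B X : Matrix (Fin n) (Fin n) ℝ)
    (hX' : Xᵀ * X = 1) (k : ℕ) (hk : 1 ≤ k) :
    (Matrix.fromBlocks B (B * Xᵀ) (X * B) (X * B * Xᵀ)) ^ k =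
      (2 ^ (k - 1) : ℝ) •
        Matrix.fromBlocks (B ^ k) (B ^ k * Xᵀ) (X * B ^ k) (X * B ^ k * Xᵀ) := by
  induction k, hk using Nat.le_induction with
  | base => simp
  | succ m hm ih =>
    rw [pow_succ, ih, smul_mul_assoc, Matrix.fromBlocks_multiply]
    have h1 : B ^ m * B + B ^ m * Xᵀ * (X * B) = (2 : ℝ) • B ^ (m + 1) := by
      rw [aux_cancel hX', ← pow_succ, two_smul]
    have h2 : B ^ m * (B * Xᵀ) + B ^ m * Xᵀ * (X * (B * Xᵀ)) = (2 : ℝ) • (B ^ (m + 1) * Xᵀ) := by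
      rw [aux_cancel hX', ← mul_assoc, ← pow_succ, two_smul]
    have h3 : X * B ^ m * B + X * B ^ m * Xᵀ * (X * B) = (2 : ℝ) • (X * B ^ (m + 1)) := by
      rw [aux_cancel hX', mul_assoc X, ← pow_succ, two_smul]
    have h4 : X * B ^ m * (B * Xᵀ) + X * B ^ m * Xᵀ * (X * (B * Xᵀ))
        = (2 : ℝ) • (X * B ^ (m + 1) * Xᵀ) := by
      rw [aux_cancel hX', ← mul_assoc, mul_assoc X, ← pow_succ, two_smul]
    rw [mul_assoc X B Xᵀ, h1, h2, h3, h4, ← Matrix.fromBlocks_smul, smul_smul]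
    congr 1
    rw [show m + 1 - 1 = m - 1 + 1 from by omega, pow_succ]

theorem sw_mul_transpose_pow {n : ℕ} (A X : Matrix (Fin n) (Fin n) ℝ)
    (hX : X * Xᵀ = 1) (k : ℕ) (hk : 1 ≤ k) :
    (sw A X * (sw A X)ᵀ) ^ k =
      (2 ^ (2 * k - 1) : ℝ) •
        Matrix.fromBlocks ((A * Aᵀ) ^ k) ((A * Aᵀ) ^ k * Xᵀ)
          (X * (A * Aᵀ) ^ k) (X * (A * Aᵀ) ^ k * Xᵀ) := by
  have hX' : Xᵀ * X = 1 := mul_eq_one_comm.mp hX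
  have hc : ∀ M N : Matrix (Fin n) (Fin n) ℝ, M * X * (Xᵀ * N) = M * N := by
    intro M N; rw [mul_assoc, ← mul_assoc X, hX, one_mul]
  have hS : sw A X * (sw A X)ᵀ
      = (2 : ℝ) • Matrix.fromBlocks (A * Aᵀ) (A * Aᵀ * Xᵀ) (X * (A * Aᵀ)) (X * (A * Aᵀ) * Xᵀ) := by
    rw [sw, Matrix.fromBlocks_transpose, Matrix.fromBlocks_multiply]
    simp only [Matrix.transpose_mul]
    have e1 : A * X * (Xᵀ * Aᵀ) + A * Aᵀ = (2 : ℝ) • (A * Aᵀ) := by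
      rw [hc, two_smul]
    have e2 : A * X * (Xᵀ * (Aᵀ * Xᵀ)) + A * (Aᵀ * Xᵀ) = (2 : ℝ) • (A * Aᵀ * Xᵀ) := by
      rw [hc, ← mul_assoc A Aᵀ Xᵀ, two_smul]
    have e3 : X * A * X * (Xᵀ * Aᵀ) + X * A * Aᵀ = (2 : ℝ) • (X * (A * Aᵀ)) := by
      rw [hc, two_smul, ← mul_assoc X A Aᵀ]
    have e4 : X * A * X * (Xᵀ * (Aᵀ * Xᵀ)) + X * A * (Aᵀ * Xᵀ)
        = (2 : ℝ) • (X * (A * Aᵀ) * Xᵀ) := by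
      rw [hc, ← mul_assoc (X * A) Aᵀ Xᵀ, two_smul, ← mul_assoc X A Aᵀ]
    rw [e1, e2, e3, e4, ← Matrix.fromBlocks_smul]
  rw [hS, smul_pow, aux_pow (A * Aᵀ) X hX' k hk, smul_smul, ← pow_add]
  congr 2
  omega
end

section
/- If A and X are N×N real matrices with X·Xᵀ = I, then tr((sw(A,X)·sw(A,X)ᵀ)^k) = 2^{2k}·tr((AAᵀ)^k) for every k ≥ 1. -/
open Matrix

lemma aux_mul_pow {m : Type*} [Fintype m] [DecidableEq m] (A B : Matrix m m ℝ) (j : ℕ) :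
    (A * B) ^ (j + 1) = A * ((B * A) ^ j * B) := by
  induction j with
  | zero => simp [Matrix.mul_assoc]
  | succ j ih =>
      rw [pow_succ, ih, pow_succ]
      noncomm_ring

lemma aux_trace_comm {m : Type*} [Fintype m] [DecidableEq m] (A B : Matrix m m ℝ) (j : ℕ) :
    ((A * B) ^ (j + 1)).trace = ((B * A) ^ (j + 1)).trace := by
  rw [aux_mul_pow, Matrix.trace_mul_comm, pow_succ, Matrix.mul_assoc]

lemma aux_fromBlocks_pow {n : ℕ} (M : Matrix (Fin n) (Fin n) ℝ) (j : ℕ) :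
    (Matrix.fromBlocks M 0 0 (0 : Matrix (Fin n) (Fin n) ℝ)) ^ (j + 1) =
      Matrix.fromBlocks (M ^ (j + 1)) 0 0 0 := by
  induction j with
  | zero => simp
  | succ j ih =>
      rw [pow_succ, ih, Matrix.fromBlocks_multiply]
      simp only [Matrix.mul_zero, Matrix.zero_mul, add_zero, zero_add]
      rw [pow_succ, pow_succ, pow_succ]

theorem trace_sw_mul_transpose_pow {n : ℕ} (A X : Matrix (Fin n) (Fin n) ℝ)
    (hX : X * Xᵀ = 1) (k : ℕ) (hk : 1 ≤ k) :
    ((sw A X * (sw A X)ᵀ) ^ k).trace = 2 ^ (2 * k) * ((A * Aᵀ) ^ k).trace := by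
  obtain ⟨j, rfl⟩ : ∃ j, k = j + 1 := ⟨k - 1, (Nat.succ_pred_eq_of_pos hk).symm⟩
  have hXtX : Xᵀ * X = 1 := mul_eq_one_comm.mp hX
  have h1 : ∀ M : Matrix (Fin n) (Fin n) ℝ, X * (Xᵀ * M) = M := fun M => by
    rw [← Matrix.mul_assoc, hX, Matrix.one_mul]
  have h2 : ∀ M : Matrix (Fin n) (Fin n) ℝ, Xᵀ * (X * M) = M := fun M => by
    rw [← Matrix.mul_assoc, hXtX, Matrix.one_mul]
  set B := A * Aᵀ with hB
  set U : Matrix (Fin n ⊕ Fin n) (Fin n ⊕ Fin n) ℝ :=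
    Matrix.fromBlocks B 0 (X * B) 0 with hU
  set V : Matrix (Fin n ⊕ Fin n) (Fin n ⊕ Fin n) ℝ :=
    Matrix.fromBlocks 1 Xᵀ 0 0 with hV
  have key : sw A X * (sw A X)ᵀ = (2 : ℝ) • (U * V) := by
    rw [sw, Matrix.fromBlocks_transpose, Matrix.fromBlocks_multiply, hU, hV,
      Matrix.fromBlocks_multiply, Matrix.fromBlocks_smul]
    simp only [Matrix.transpose_mul, Matrix.mul_assoc, h1, hB, Matrix.mul_one,
      Matrix.mul_zero, add_zero, zero_add, Matrix.one_mul, Matrix.zero_mul,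
      two_smul, Matrix.mul_add]
  have hVU : V * U = Matrix.fromBlocks (B + B) 0 0 0 := by
    rw [hU, hV, Matrix.fromBlocks_multiply]
    congr 1 <;> simp [h2]
  calc ((sw A X * (sw A X)ᵀ) ^ (j + 1)).trace
      = ((2 : ℝ) ^ (j + 1)) * ((U * V) ^ (j + 1)).trace := by
        rw [key, smul_pow, Matrix.trace_smul, smul_eq_mul]
    _ = ((2 : ℝ) ^ (j + 1)) * ((V * U) ^ (j + 1)).trace := by
        rw [aux_trace_comm]
    _ = ((2 : ℝ) ^ (j + 1)) * ((B + B) ^ (j + 1)).trace := by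
        rw [hVU, aux_fromBlocks_pow]
        simp [Matrix.trace, Fintype.sum_sum_type, Matrix.fromBlocks]
    _ = 2 ^ (2 * (j + 1)) * (B ^ (j + 1)).trace := by
        have : B + B = (2 : ℝ) • B := by rw [two_smul]
        rw [this, smul_pow, Matrix.trace_smul, smul_eq_mul, two_mul, pow_add]
        ring
end

section
/- Let s, t, N be integers with N ≥ 1, and let H = ⟨(s,t),(t,s)⟩ be the subgroup of (ZMod N) × (ZMod N) generated by (s,t) and (t,s). Then the index of H in (ZMod N) × (ZMod N) divides N · gcd(s² − t², N) (in particular, if gcd(s−t, N) = gcd(s+t, N) = 1, the quotient has order dividing N). -/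
theorem index_st_subgroup_divides (s t : ℤ) (N : ℕ) (hN : 1 ≤ N) :
    (AddSubgroup.closure
        ({((s : ZMod N), (t : ZMod N)), ((t : ZMod N), (s : ZMod N))} :
          Set (ZMod N × ZMod N))).index ∣
      N * Int.gcd (s ^ 2 - t ^ 2) (N : ℤ) := by
  set g : ℕ := Int.gcd (s ^ 2 - t ^ 2) (N : ℤ) with hg
  have hN0 : N ≠ 0 := by omega
  have hgdvd : g ∣ N := Int.natCast_dvd_natCast.mp (hg ▸ Int.gcd_dvd_right _ _)
  have hgne : g ≠ 0 := fun h => hN0 (Nat.eq_zero_of_zero_dvd (h ▸ hgdvd))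
  set H := AddSubgroup.closure
      ({((s : ZMod N), (t : ZMod N)), ((t : ZMod N), (s : ZMod N))} :
        Set (ZMod N × ZMod N)) with hH
  have ha : ((s : ZMod N), (t : ZMod N)) ∈ H :=
    AddSubgroup.subset_closure (by simp)
  have hb : ((t : ZMod N), (s : ZMod N)) ∈ H :=
    AddSubgroup.subset_closure (by simp)
  set A : ℤ := Int.gcdA (s ^ 2 - t ^ 2) N with hA
  have h1 : (g : ℤ) = (s ^ 2 - t ^ 2) * A + N * Int.gcdB (s ^ 2 - t ^ 2) N :=
    Int.gcd_eq_gcd_ab _ _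
  have hcast : ((g : ℕ) : ZMod N) = ((s ^ 2 - t ^ 2 : ℤ) : ZMod N) * ((A : ℤ) : ZMod N) := by
    have := congrArg (Int.cast : ℤ → ZMod N) h1
    push_cast at this ⊢
    simpa [ZMod.natCast_self] using this
  -- (s²-t², 0) ∈ H
  have hd : ((((s ^ 2 - t ^ 2 : ℤ) : ZMod N)), (0 : ZMod N)) ∈ H := by
    have := H.sub_mem (H.zsmul_mem ha s) (H.zsmul_mem hb t)
    convert this using 2 <;> push_cast <;> simp [Prod.smul_def, zsmul_eq_mul] <;> ring
  -- (0, s²-t²) ∈ H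
  have he : ((0 : ZMod N), (((s ^ 2 - t ^ 2 : ℤ) : ZMod N))) ∈ H := by
    have := H.sub_mem (H.zsmul_mem ha (-t)) (H.zsmul_mem hb (-s))
    convert this using 2 <;> push_cast <;> simp [Prod.smul_def, zsmul_eq_mul] <;> ring
  have hgmem1 : (((g : ℕ) : ZMod N), (0 : ZMod N)) ∈ H := by
    have hmem := H.zsmul_mem hd A
    convert hmem using 1
    simp [Prod.ext_iff, Prod.smul_def, zsmul_eq_mul, hcast, mul_comm]
  have hgmem2 : ((0 : ZMod N), ((g : ℕ) : ZMod N)) ∈ H := by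
    have hmem := H.zsmul_mem he A
    convert hmem using 1
    simp [Prod.ext_iff, Prod.smul_def, zsmul_eq_mul, hcast, mul_comm]
  set c : ZMod N := ((g : ℕ) : ZMod N) with hc
  set P : AddSubgroup (ZMod N × ZMod N) :=
    (AddSubgroup.zmultiples c).prod (AddSubgroup.zmultiples c) with hP
  have hPH : P ≤ H := by
    rintro ⟨x, y⟩ ⟨⟨m, hm⟩, ⟨k, hk⟩⟩
    have : (x, y) = m • (c, (0 : ZMod N)) + k • ((0 : ZMod N), c) := by
      simp only [Prod.smul_def, Prod.mk_add_mk, Prod.ext_iff, smul_zero]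
      simp only at hm hk
      exact ⟨by simp [← hm, zsmul_eq_mul], by simp [← hk, zsmul_eq_mul]⟩
    rw [this]
    exact H.add_mem (H.zsmul_mem hgmem1 m) (H.zsmul_mem hgmem2 k)
  have hdvd1 : H.index ∣ P.index := AddSubgroup.index_dvd_of_le hPH
  -- compute P.index
  have hcard : Nat.card (AddSubgroup.zmultiples c) = N / g := by
    rw [Nat.card_zmultiples, hc, ZMod.addOrderOf_coe g hN0, Nat.gcd_eq_right hgdvd]
  have hidx : (AddSubgroup.zmultiples c).index = g := by
    have h2 := (AddSubgroup.zmultiples c).index_mul_card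
    rw [hcard, Nat.card_zmod] at h2
    have h3 : g * (N / g) = N := Nat.mul_div_cancel' hgdvd
    have hpos : 0 < N / g := Nat.div_pos (Nat.le_of_dvd (by omega) hgdvd) (Nat.pos_of_ne_zero hgne)
    exact Nat.eq_of_mul_eq_mul_right hpos (by rw [h2, h3])
  have hPidx : P.index = g * g := by
    rw [hP]; simp [hidx]
  exact hPidx ▸ hdvd1 |>.trans (mul_dvd_mul hgdvd dvd_rfl)
end
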